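/- For every node p of the syntax tree of e and all strings w' and w'': if w' ∈ L(π(p)), then there exists a PWπ run ⟨p; w'·w''⟩ →* ⟨k(p); w''⟩, i.e., the machine can consume exactly a string matched by the subexpression at p and arrive at p's continuation. -/

import Mathlib

/-!
Formalization of backtracking regular-expression matching (PWπ / PWFπ / HFπ machines).

Nodes of the syntax tree of a fixed regular expression `e` are represented as
positions (lists of booleans: `false` = left/only child, `true` = right child).
`e.sub p` is the subexpression at position `p` (`none` if the position is invalid),
and `e.kont p` is the continuation pointer `k(p)` (`none` represents `⊥`).
-/

inductive RE (σ : Type) : Type where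
  | sym : σ → RE σ
  | eps : RE σ
  | cat : RE σ → RE σ → RE σ
  | alt : RE σ → RE σ → RE σ
  | star : RE σ → RE σ

/-- A position (node) in the syntax tree. The root is `[]`. -/
abbrev RPos : Type := List Bool

/-- A node pointer: either a position or `⊥` (represented by `none`). -/
abbrev RNode : Type := Option RPos

/-- A configuration of the PWπ machine: a pointer and the remaining input. -/
abbrev RConf (σ : Type) : Type := RNode × List σ

namespace RE

variable {σ : Type}

/-- The subexpression `π(p)` of `e` at position `p` (`none` if `p` is invalid). -/
def sub : RE σ → RPos → Option (RE σ)
  | f, [] => some f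
  | cat f1 f2, b :: p => sub (if b then f2 else f1) p
  | alt f1 f2, b :: p => sub (if b then f2 else f1) p
  | star f1, false :: p => sub f1 p
  | _, _ => none

/-- `kontAux f cur rest kc` computes the continuation of the node at position
`cur ++ rest`, where `f` is the subexpression at `cur` and `kc` is the
continuation of the node at `cur`. -/
def kontAux : RE σ → RPos → RPos → RNode → RNode
  | _, _, [], kc => kc
  | cat f1 _, cur, false :: rest, _ => kontAux f1 (cur ++ [false]) rest (some (cur ++ [true]))
  | cat _ f2, cur, true :: rest, kc => kontAux f2 (cur ++ [true]) rest kc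
  | alt f1 _, cur, false :: rest, kc => kontAux f1 (cur ++ [false]) rest kc
  | alt _ f2, cur, true :: rest, kc => kontAux f2 (cur ++ [true]) rest kc
  | star f1, cur, false :: rest, _ => kontAux f1 (cur ++ [false]) rest (some cur)
  | _, _, _, _ => none

/-- The continuation pointer `k(p)`; `k(p_root) = ⊥ = none`. -/
def kont (e : RE σ) (p : RPos) : RNode := kontAux e [] p none

/-- `π` extended to node pointers. -/
def subN (e : RE σ) : RNode → Option (RE σ)
  | none => none
  | some p => e.sub p

/-- `k` extended to node pointers. -/
def kontN (e : RE σ) : RNode → RNode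
  | none => none
  | some p => e.kont p

/-- The language of a regular expression. -/
def lang : RE σ → Language σ
  | sym a => {[a]}
  | eps => 1
  | cat f1 f2 => lang f1 * lang f2
  | alt f1 f2 => lang f1 + lang f2
  | star f => KStar.kstar (lang f)

/-- The transition relation of the PWπ machine. -/
inductive PWStep (e : RE σ) : RConf σ → RConf σ → Prop
  | altL {p : RPos} {f1 f2 : RE σ} {w : List σ} :
      e.sub p = some (alt f1 f2) → PWStep e (some p, w) (some (p ++ [false]), w)
  | altR {p : RPos} {f1 f2 : RE σ} {w : List σ} :
      e.sub p = some (alt f1 f2) → PWStep e (some p, w) (some (p ++ [true]), w)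
  | starK {p : RPos} {f1 : RE σ} {w : List σ} :
      e.sub p = some (star f1) → PWStep e (some p, w) (e.kont p, w)
  | starI {p : RPos} {f1 : RE σ} {w : List σ} :
      e.sub p = some (star f1) → PWStep e (some p, w) (some (p ++ [false]), w)
  | catL {p : RPos} {f1 f2 : RE σ} {w : List σ} :
      e.sub p = some (cat f1 f2) → PWStep e (some p, w) (some (p ++ [false]), w)
  | symC {p : RPos} {a : σ} {w : List σ} :
      e.sub p = some (sym a) → PWStep e (some p, a :: w) (e.kont p, w)
  | epsC {p : RPos} {w : List σ} :
      e.sub p = some eps → PWStep e (some p, w) (e.kont p, w)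

/-- `IsPath e t p w q` : `t : p ⇒[w] q` is a path of pointers labelled by the string `w`. -/
inductive IsPath (e : RE σ) : List RNode → RNode → List σ → RNode → Prop
  | single (p : RNode) : IsPath e [p] p [] p
  | snoc {t : List RNode} {p q q' : RNode} {w w' w1 : List σ} :
      IsPath e t p w q → PWStep e (q, w' ++ w1) (q', w1) →
      IsPath e (t ++ [q']) p (w ++ w') q'

/-- The transition relation of the PWFπ (backtracking) machine on stacks of
PWπ configurations. -/
inductive PWFStep (e : RE σ) : List (RConf σ) → List (RConf σ) → Prop
  | one {c c' : RConf σ} {f : List (RConf σ)} :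
      PWStep e c c' → (∀ d, PWStep e c d → d = c') → PWFStep e (c :: f) (c' :: f)
  | two {c c1 c2 : RConf σ} {f : List (RConf σ)} :
      PWStep e c c1 → PWStep e c c2 → c1 ≠ c2 →
      (∀ d, PWStep e c d → d = c1 ∨ d = c2) → PWFStep e (c :: f) (c1 :: c2 :: f)
  | fail {c : RConf σ} {f : List (RConf σ)} :
      (∀ d, ¬ PWStep e c d) → PWFStep e (c :: f) f

end RE

/-- `NSteps R n a b` : there is a sequence of exactly `n` `R`-transitions from `a` to `b`. -/
def NSteps {α : Type*} (R : α → α → Prop) : ℕ → α → α → Prop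
  | 0, a, b => a = b
  | n + 1, a, b => ∃ c, R a c ∧ NSteps R n c b

namespace RE

variable {σ : Type}

/-- A non-consuming PWπ transition, viewed as a relation on pointers. -/
def EpsStep (e : RE σ) (p q : RNode) : Prop := PWStep e (p, ([] : List σ)) (q, [])

/-- `L` is (a list representing) `evolve(p)`: the nodes reachable from `p` by
non-consuming transitions whose subexpression is an input symbol. -/
def IsEvolve (e : RE σ) (p : RNode) (L : List RNode) : Prop :=
  ∀ q, q ∈ L ↔ (Relation.ReflTransGen (EpsStep e) p q ∧ ∃ a, e.subN q = some (sym a))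

/-- `DRel e a P r` : `r` is a result of the derivative computation `D_a(P)`. -/
inductive DRel (e : RE σ) (a : σ) : List RNode → List RNode → Prop
  | nil : DRel e a [] []
  | symNe {h : RNode} {t r : List RNode} {b : σ} :
      e.subN h = some (sym b) → b ≠ a → DRel e a t r → DRel e a (h :: t) r
  | symEq {h : RNode} {t r : List RNode} :
      e.subN h = some (sym a) → DRel e a t r → DRel e a (h :: t) (e.kontN h :: r)
  | ev {h : RNode} {t r L : List RNode} :
      (∀ b, e.subN h ≠ some (sym b)) → IsEvolve e h L →
      DRel e a (L ++ t) r → DRel e a (h :: t) r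

/-- The transition relation on wP frames: `(w, P) → (w·a, D_a(P))` when `D_a(P) ≠ []`. -/
inductive WPStep (e : RE σ) : List σ × List RNode → List σ × List RNode → Prop
  | mk {w : List σ} {P : List RNode} {a : σ} {r : List RNode} :
      DRel e a P r → r ≠ [] → WPStep e (w, P) (w ++ [a], r)

end RE

/-- A configuration of the HFπ machine: a history (set of node-sets) and a
queue of wP frames. -/
abbrev HFConf (σ : Type) : Type := Finset (Finset RNode) × List (List σ × List RNode)

namespace RE

variable {σ : Type}

/-- The transition relation of the HFπ machine: the head frame `(w, P)` is replaced by
exactly those of its wP-successors (one for each viable symbol) whose node-sets are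
not in the history `H`, and their node-sets are added to `H`. -/
inductive HFStep (e : RE σ) : HFConf σ → HFConf σ → Prop
  | mk {H : Finset (Finset RNode)} {w : List σ} {P : List RNode}
      {f : List (List σ × List RNode)} (l : List (σ × List RNode)) :
      (l.map Prod.fst).Nodup →
      (∀ x ∈ l, DRel e x.1 P x.2 ∧ x.2 ≠ [] ∧ x.2.toFinset ∉ H) →
      (∀ (a : σ) (r : List RNode), DRel e a P r → r ≠ [] → r.toFinset ∉ H →
        ∃ r', (a, r') ∈ l ∧ r'.toFinset = r.toFinset) →
      HFStep e (H, (w, P) :: f)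
        (H ∪ (l.map (fun x => x.2.toFinset)).toFinset,
         f ++ l.map (fun x => (w ++ [x.1], x.2)))

/-- Every starred subexpression of `e` has a body that does not match the empty string. -/
def NonNullableStars (e : RE σ) : Prop :=
  ∀ (p : RPos) (f : RE σ), e.sub p = some (star f) → ([] : List σ) ∉ lang f

end RE
namespace RE

variable {σ : Type}

lemma sub_append (e : RE σ) (p : RPos) (f : RE σ) (hf : e.sub p = some f) (q : RPos) :
    e.sub (p ++ q) = f.sub q := by
  induction p generalizing e with
  | nil => simp [sub] at hf; subst hf; rfl
  | cons b t ih =>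
    cases e with
    | sym a => simp [sub] at hf
    | eps => simp [sub] at hf
    | cat f1 f2 =>
      cases b <;> simpa [sub] using ih _ hf
    | alt f1 f2 =>
      cases b <;> simpa [sub] using ih _ hf
    | star f1 =>
      cases b
      · simpa [sub] using ih _ hf
      · simp [sub] at hf

lemma kontAux_append (f : RE σ) (cur r1 r2 : RPos) (kc : RNode) (f' : RE σ)
    (hf : f.sub r1 = some f') :
    kontAux f cur (r1 ++ r2) kc = kontAux f' (cur ++ r1) r2 (kontAux f cur r1 kc) := by
  induction r1 generalizing f cur kc with
  | nil => simp [sub] at hf; subst hf; simp [kontAux]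
  | cons b t ih =>
    cases f with
    | sym a => simp [sub] at hf
    | eps => simp [sub] at hf
    | cat f1 f2 =>
      cases b
      · simp [sub] at hf
        simpa [kontAux, List.append_assoc] using
          ih f1 (cur ++ [false]) (some (cur ++ [true])) hf
      · simp [sub] at hf
        simpa [kontAux, List.append_assoc] using ih f2 (cur ++ [true]) kc hf
    | alt f1 f2 =>
      cases b
      · simp [sub] at hf
        simpa [kontAux, List.append_assoc] using ih f1 (cur ++ [false]) kc hf
      · simp [sub] at hf
        simpa [kontAux, List.append_assoc] using ih f2 (cur ++ [true]) kc hf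
    | star f1 =>
      cases b
      · simp [sub] at hf
        simpa [kontAux, List.append_assoc] using ih f1 (cur ++ [false]) (some cur) hf
      · simp [sub] at hf

lemma kont_child (e : RE σ) (p : RPos) (f : RE σ) (hf : e.sub p = some f) (b : Bool) :
    e.kont (p ++ [b]) = kontAux f p [b] (e.kont p) := by
  simpa [kont] using kontAux_append e [] p [b] none f hf

lemma kont_cat_left (e : RE σ) (p : RPos) (f1 f2 : RE σ)
    (hf : e.sub p = some (cat f1 f2)) : e.kont (p ++ [false]) = some (p ++ [true]) := by
  rw [kont_child e p _ hf]; simp [kontAux]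

lemma kont_cat_right (e : RE σ) (p : RPos) (f1 f2 : RE σ)
    (hf : e.sub p = some (cat f1 f2)) : e.kont (p ++ [true]) = e.kont p := by
  rw [kont_child e p _ hf]; simp [kontAux]

lemma kont_alt (e : RE σ) (p : RPos) (f1 f2 : RE σ)
    (hf : e.sub p = some (alt f1 f2)) (b : Bool) : e.kont (p ++ [b]) = e.kont p := by
  rw [kont_child e p _ hf]; cases b <;> simp [kontAux]

lemma kont_star (e : RE σ) (p : RPos) (f1 : RE σ)
    (hf : e.sub p = some (star f1)) : e.kont (p ++ [false]) = some p := by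
  rw [kont_child e p _ hf]; simp [kontAux]

end RE

/-- if `w' ∈ L(π(p))` then the PWπ machine can consume exactly `w'`
from `⟨p; w'·w''⟩` and arrive at the continuation `⟨k(p); w''⟩`. -/
theorem match_reaches_kont {σ : Type} (e : RE σ) (p : RPos) (f : RE σ)
    (hf : e.sub p = some f) (w' w'' : List σ) (hw : w' ∈ RE.lang f) :
    Relation.ReflTransGen (RE.PWStep e) (some p, w' ++ w'') (e.kont p, w'') := by
  induction f generalizing p w' w'' with
  | sym a =>
    simp [RE.lang] at hw; subst hw
    exact Relation.ReflTransGen.single (RE.PWStep.symC hf)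
  | eps =>
    simp [RE.lang, Language.mem_one] at hw; subst hw
    exact Relation.ReflTransGen.single (RE.PWStep.epsC hf)
  | cat f1 f2 ih1 ih2 =>
    rw [RE.lang, Language.mem_mul] at hw
    obtain ⟨w1, hw1, w2, hw2, rfl⟩ := hw
    have h1 : e.sub (p ++ [false]) = some f1 := by
      rw [RE.sub_append e p _ hf]; simp [RE.sub]
    have h2 : e.sub (p ++ [true]) = some f2 := by
      rw [RE.sub_append e p _ hf]; simp [RE.sub]
    refine Relation.ReflTransGen.head (RE.PWStep.catL hf) ?_
    have t1 := ih1 (p ++ [false]) h1 w1 (w2 ++ w'') hw1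
    rw [RE.kont_cat_left e p f1 f2 hf] at t1
    have t2 := ih2 (p ++ [true]) h2 w2 w'' hw2
    rw [RE.kont_cat_right e p f1 f2 hf] at t2
    rw [List.append_assoc]
    exact t1.trans t2
  | alt f1 f2 ih1 ih2 =>
    rw [RE.lang, Language.mem_add] at hw
    cases hw with
    | inl h =>
      have h1 : e.sub (p ++ [false]) = some f1 := by
        rw [RE.sub_append e p _ hf]; simp [RE.sub]
      refine Relation.ReflTransGen.head (RE.PWStep.altL hf) ?_
      have t := ih1 (p ++ [false]) h1 w' w'' h
      rwa [RE.kont_alt e p f1 f2 hf false] at t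
    | inr h =>
      have h2 : e.sub (p ++ [true]) = some f2 := by
        rw [RE.sub_append e p _ hf]; simp [RE.sub]
      refine Relation.ReflTransGen.head (RE.PWStep.altR hf) ?_
      have t := ih2 (p ++ [true]) h2 w' w'' h
      rwa [RE.kont_alt e p f1 f2 hf true] at t
  | star f1 ih =>
    rw [RE.lang, Language.mem_kstar] at hw
    obtain ⟨L, rfl, hL⟩ := hw
    have h1 : e.sub (p ++ [false]) = some f1 := by
      rw [RE.sub_append e p _ hf]; simp [RE.sub]
    induction L generalizing w'' with
    | nil =>
      simpa using Relation.ReflTransGen.single (RE.PWStep.starK (f1 := f1) hf)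
    | cons y t ihL =>
      refine Relation.ReflTransGen.head (RE.PWStep.starI (f1 := f1) hf) ?_
      have t1 := ih (p ++ [false]) h1 y (t.flatten ++ w'') (hL y (by simp))
      rw [RE.kont_star e p f1 hf] at t1
      have t2 := ihL w'' (fun z hz => hL z (List.mem_cons_of_mem _ hz))
      simpa [List.append_assoc] using t1.trans t2
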